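/- Let 0 < α ≤ β ≤ 1 and let {X_{k,l}, k,l ≥ 0} be i.i.d. real random variables with X a generic copy whose distribution is symmetric (X and −X have the same law). If n P(|X| > n) → 0 as n → ∞, then (1/(A_m^α A_n^β)) Σ_{k=0}^m Σ_{l=0}^n A_{m-k}^{α-1} A_{n-l}^{β-1} X_{k,l} → 0 in probability as m, n → ∞ (i.e., as min(m,n) → ∞). -/

import Mathlib

open MeasureTheory ProbabilityTheory Filter Finset Topology

/-- `cesaroA α n` is the Cesàro coefficient `A_n^α = (α+1)(α+2)⋯(α+n)/n!`
(with `A_0^α = 1`). Note that this also gives `A_n^{-1} = 0` for `n ≥ 1`. -/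
noncomputable def cesaroA (α : ℝ) (n : ℕ) : ℝ :=
  ∏ j ∈ Finset.range n, (α + (j + 1)) / (j + 1)

lemma cesaroA_pos {α : ℝ} (hα : -1 < α) (n : ℕ) : 0 < cesaroA α n := by
  refine Finset.prod_pos fun j _ => div_pos ?_ (by positivity)
  have : (0:ℝ) ≤ j := Nat.cast_nonneg j
  linarith

lemma cesaroA_le_one {α : ℝ} (hα' : -1 < α) (hα : α ≤ 0) (n : ℕ) : cesaroA α n ≤ 1 := by
  rw [cesaroA]
  refine Finset.prod_le_one (fun j _ => ?_) (fun j _ => ?_)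
  · have : (0:ℝ) ≤ j := Nat.cast_nonneg j
    have h1 : 0 < α + ((j:ℝ) + 1) := by linarith
    positivity
  · rw [div_le_one (by positivity)]
    linarith

lemma cesaroA_one_le {α : ℝ} (hα : 0 ≤ α) (n : ℕ) : 1 ≤ cesaroA α n := by
  rw [cesaroA]
  calc (1:ℝ) = ∏ _j ∈ Finset.range n, 1 := by simp
  _ ≤ ∏ j ∈ Finset.range n, (α + (j + 1)) / (j + 1) := by
      refine Finset.prod_le_prod (fun j _ => zero_le_one) (fun j _ => ?_)
      rw [le_div_iff₀ (by positivity)]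
      linarith

lemma cesaroA_succ (α : ℝ) (n : ℕ) :
    cesaroA α (n + 1) = cesaroA α n * ((α + (n + 1)) / (n + 1)) :=
  Finset.prod_range_succ _ n

lemma cesaroA_sub_one_succ (α : ℝ) (n : ℕ) :
    cesaroA (α - 1) (n + 1) = α / (n + 1) * cesaroA α n := by
  induction n with
  | zero => simp [cesaroA]
  | succ n ih =>
    rw [cesaroA_succ, ih, cesaroA_succ]
    have h1 : ((n:ℝ) + 1) ≠ 0 := by positivity
    have h2 : ((n:ℝ) + 1 + 1) ≠ 0 := by positivity
    push_cast
    field_simp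
    ring

lemma sum_cesaroA (α : ℝ) (m : ℕ) :
    ∑ k ∈ Finset.range (m + 1), cesaroA (α - 1) k = cesaroA α m := by
  induction m with
  | zero => simp [cesaroA]
  | succ m ih =>
    rw [Finset.sum_range_succ, ih, cesaroA_sub_one_succ, cesaroA_succ]
    have h1 : ((m:ℝ) + 1) ≠ 0 := by positivity
    push_cast
    field_simp
    ring

lemma cesaroA_tendsto_atTop {α : ℝ} (hα : 0 < α) :
    Tendsto (cesaroA α) atTop atTop := by
  have key : ∀ n, 1 + ∑ j ∈ Finset.range n, α / (j + 1) ≤ cesaroA α n := by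
    intro n
    induction n with
    | zero => simp [cesaroA]
    | succ n ih =>
      rw [Finset.sum_range_succ, cesaroA_succ]
      have h1 : (0:ℝ) < (n:ℝ) + 1 := by positivity
      have h2 : 0 ≤ ∑ j ∈ Finset.range n, α / (j + 1) :=
        Finset.sum_nonneg fun j _ => by positivity
      have h3 : cesaroA α n * ((α + ((n:ℝ) + 1)) / ((n:ℝ) + 1))
          = cesaroA α n + cesaroA α n * (α / ((n:ℝ)+1)) := by
        field_simp
        ring
      rw [h3]
      have h4 : 0 < α / ((n:ℝ)+1) := by positivity
      have h5 : 1 ≤ cesaroA α n := by linarith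
      have h6 : α/((n:ℝ)+1) ≤ cesaroA α n * (α/((n:ℝ)+1)) :=
        le_mul_of_one_le_left h4.le h5
      linarith
  refine tendsto_atTop_mono key ?_
  have : Tendsto (fun n => ∑ j ∈ Finset.range n, α / (j + 1 : ℝ)) atTop atTop := by
    have := (Real.tendsto_sum_range_one_div_nat_succ_atTop.const_mul_atTop hα)
    refine this.congr fun n => ?_
    rw [Finset.mul_sum]
    exact Finset.sum_congr rfl fun j _ => by ring
  exact tendsto_atTop_add_const_left _ 1 this

section Aux

variable {Ω : Type*} [MeasureSpace Ω] [IsProbabilityMeasure (ℙ : Measure Ω)]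

lemma tail_bound' (X0 : Ω → ℝ)
    (hweak : Tendsto (fun n : ℕ => (n : ℝ) * (ℙ {ω | (n : ℝ) < |X0 ω|}).toReal)
      atTop (𝓝 0)) {δ : ℝ} (hδ : 0 < δ) :
    ∃ N : ℝ, 1 ≤ N ∧ ∀ t : ℝ, N ≤ t → (ℙ {ω | t < |X0 ω|}).toReal ≤ δ / t := by
  have hev : ∀ᶠ n : ℕ in atTop,
      (n : ℝ) * (ℙ {ω | (n : ℝ) < |X0 ω|}).toReal < δ / 2 := by
    have := hweak.eventually (eventually_lt_nhds (by linarith : (0:ℝ) < δ/2))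
    exact this
  obtain ⟨n0, hn0⟩ := eventually_atTop.mp hev
  refine ⟨max 1 (n0 + 1), le_max_left _ _, ?_⟩
  intro t ht
  have h1t : (1:ℝ) ≤ t := le_trans (le_max_left _ _) ht
  have htpos : 0 < t := by linarith
  have hn0t : ((n0:ℝ) + 1) ≤ t := by
    have := le_trans (le_max_right 1 ((n0:ℝ)+1)) ht
    exact_mod_cast this
  set n := ⌊t⌋₊ with hn
  have hnt : (n : ℝ) ≤ t := Nat.floor_le htpos.le
  have htn : t < (n : ℝ) + 1 := Nat.lt_floor_add_one t
  have hn1 : 1 ≤ n := Nat.le_floor (by exact_mod_cast h1t)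
  have hnn0 : n0 ≤ n := by
    have : n0 + 1 ≤ n := Nat.le_floor (by push_cast; linarith)
    omega
  have hmono : (ℙ {ω | t < |X0 ω|}).toReal ≤ (ℙ {ω | (n:ℝ) < |X0 ω|}).toReal := by
    refine ENNReal.toReal_mono (measure_ne_top _ _) (measure_mono ?_)
    exact fun ω h => lt_of_le_of_lt hnt h
  have hkey := hn0 n hnn0
  have hTnn : 0 ≤ (ℙ {ω | (n:ℝ) < |X0 ω|}).toReal := ENNReal.toReal_nonneg
  have hTnn' : 0 ≤ (ℙ {ω | t < |X0 ω|}).toReal := ENNReal.toReal_nonneg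
  rw [le_div_iff₀ htpos]
  have hncast : (1:ℝ) ≤ (n:ℝ) := by exact_mod_cast hn1
  have ht2n : t ≤ 2 * n := by linarith
  calc (ℙ {ω | t < |X0 ω|}).toReal * t
      ≤ (ℙ {ω | (n:ℝ) < |X0 ω|}).toReal * (2 * n) := by
        apply mul_le_mul hmono ht2n htpos.le hTnn
    _ = 2 * ((n:ℝ) * (ℙ {ω | (n:ℝ) < |X0 ω|}).toReal) := by ring
    _ ≤ δ := by linarith

lemma trunc_sq_bound' (X0 : Ω → ℝ) (hmeas0 : Measurable X0)
    (hweak : Tendsto (fun n : ℕ => (n : ℝ) * (ℙ {ω | (n : ℝ) < |X0 ω|}).toReal)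
      atTop (𝓝 0)) {δ : ℝ} (hδ : 0 < δ) :
    ∃ N : ℝ, 1 ≤ N ∧ ∀ t : ℝ, N ≤ t →
      ∫ ω, (if |X0 ω| ≤ t then (X0 ω)^2 else 0) ∂ℙ ≤ δ * t := by
  obtain ⟨N1, hN11, htail⟩ := tail_bound' X0 hweak (show 0 < δ/5 by linarith)
  refine ⟨max (2*N1) (20*N1^2/δ), le_trans (by linarith) (le_max_left _ _), ?_⟩
  intro t ht
  have ht1 : 2*N1 ≤ t := le_trans (le_max_left _ _) ht
  have ht2 : 20*N1^2/δ ≤ t := le_trans (le_max_right _ _) ht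
  have htpos : 0 < t := by linarith
  have hN1pos : 0 < N1 := by linarith
  set f : Ω → ℝ := fun ω => if |X0 ω| ≤ t then (X0 ω)^2 else 0 with hfdef
  have hf_meas : Measurable f :=
    Measurable.ite (measurableSet_le hmeas0.abs measurable_const)
      (hmeas0.pow_const 2) measurable_const
  have hf_nn : ∀ ω, 0 ≤ f ω := by
    intro ω; simp only [hfdef]; split_ifs
    · exact sq_nonneg _
    · exact le_refl 0
  have hf_bdd : ∀ ω, f ω ≤ t^2 := by
    intro ω; simp only [hfdef]; split_ifs with h
    · have := abs_le.mp h
      nlinarith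
    · positivity
  have hf_int : Integrable f ℙ := by
    have hmem : MemLp f 1 ℙ := MemLp.of_bound hf_meas.aestronglyMeasurable (t^2)
      (ae_of_all _ fun ω => by
        rw [Real.norm_eq_abs, abs_of_nonneg (hf_nn ω)]; exact hf_bdd ω)
    exact hmem.integrable le_rfl
  rw [hf_int.integral_eq_integral_Ioc_meas_le (ae_of_all _ hf_nn) (ae_of_all _ hf_bdd)]
  set G : ℝ → ℝ := fun u => (ℙ {a | u ≤ f a}).toReal with hGdef
  have hG_anti : Antitone G := by
    intro u v huv
    exact ENNReal.toReal_mono (measure_ne_top _ _)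
      (measure_mono (fun a ha => le_trans huv ha))
  have hG_meas : Measurable G := hG_anti.measurable
  have hG_nn : ∀ u, 0 ≤ G u := fun u => ENNReal.toReal_nonneg
  have hG_le1 : ∀ u, G u ≤ 1 := by
    intro u
    rw [hGdef]
    have : ℙ {a | u ≤ f a} ≤ 1 := prob_le_one
    exact ENNReal.toReal_le_of_le_ofReal zero_le_one (by simpa using this)
  set M : ℝ := 4 * N1^2 with hMdef
  have hMpos : 0 < M := by positivity
  have hMt : M ≤ t^2 := by nlinarith
  have hGint : ∀ (u v : ℝ), IntegrableOn G (Set.Ioc u v) := by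
    intro u v
    refine Integrable.mono' (integrableOn_const (C := (1:ℝ)) measure_Ioc_lt_top.ne)
      hG_meas.aestronglyMeasurable (ae_of_all _ fun x => ?_)
    rw [Real.norm_eq_abs, abs_of_nonneg (hG_nn x)]
    exact hG_le1 x
  have hsplit : ∫ u in Set.Ioc 0 (t^2), G u
      = (∫ u in Set.Ioc 0 M, G u) + ∫ u in Set.Ioc M (t^2), G u := by
    rw [← setIntegral_union (Set.Ioc_disjoint_Ioc_of_le le_rfl) measurableSet_Ioc
      (hGint 0 M) (hGint M (t^2)), Set.Ioc_union_Ioc_eq_Ioc hMpos.le hMt]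
  change ∫ u in Set.Ioc 0 (t^2), G u ≤ δ * t
  rw [hsplit]
  have hpart1 : ∫ u in Set.Ioc 0 M, G u ≤ M := by
    have : ∫ u in Set.Ioc 0 M, G u ≤ ∫ _u in Set.Ioc 0 M, (1:ℝ) := by
      refine setIntegral_mono_on (hGint 0 M)
        (integrableOn_const (C := (1:ℝ)) measure_Ioc_lt_top.ne) measurableSet_Ioc
        (fun x _ => hG_le1 x)
    calc ∫ u in Set.Ioc 0 M, G u ≤ ∫ _u in Set.Ioc 0 M, (1:ℝ) := this
      _ = M := by
          simp [Real.volume_Ioc, ENNReal.toReal_ofReal hMpos.le, hMpos.le]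
  have hpart2 : ∫ u in Set.Ioc M (t^2), G u
      ≤ ∫ u in Set.Ioc M (t^2), (2*(δ/5)) * u ^ (-(1/2) : ℝ) := by
    refine setIntegral_mono_on (hGint M (t^2)) ?_ measurableSet_Ioc ?_
    · have hii : IntervalIntegrable (fun u : ℝ => u ^ (-(1/2) : ℝ)) volume M (t^2) :=
        intervalIntegral.intervalIntegrable_rpow' (by norm_num)
      exact (hii.const_mul (2*(δ/5))).1
    · intro u hu
      obtain ⟨huM, hut⟩ := hu
      have hupos : 0 < u := lt_trans hMpos huM
      have hsq : 2 * N1 ≤ Real.sqrt u := by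
        have : Real.sqrt M ≤ Real.sqrt u := Real.sqrt_le_sqrt huM.le
        rwa [hMdef, show (4:ℝ)*N1^2 = (2*N1)^2 by ring,
          Real.sqrt_sq (by linarith)] at this
      have hsqpos : 0 < Real.sqrt u := Real.sqrt_pos.mpr hupos
      have hsub : {a | u ≤ f a} ⊆ {a | Real.sqrt u / 2 < |X0 a|} := by
        intro a ha
        simp only [Set.mem_setOf_eq] at ha ⊢
        by_cases hcase : |X0 a| ≤ t
        · have hfa : f a = (X0 a)^2 := if_pos hcase
          rw [hfa] at ha
          have : Real.sqrt u ≤ |X0 a| := by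
            calc Real.sqrt u ≤ Real.sqrt ((X0 a)^2) := Real.sqrt_le_sqrt ha
              _ = |X0 a| := Real.sqrt_sq_eq_abs _
          linarith
        · have hfa : f a = 0 := if_neg hcase
          rw [hfa] at ha; linarith
      have hTle : G u ≤ (ℙ {a | Real.sqrt u / 2 < |X0 a|}).toReal :=
        ENNReal.toReal_mono (measure_ne_top _ _) (measure_mono hsub)
      have htb := htail (Real.sqrt u / 2) (by linarith)
      have hrpow : u ^ (-(1/2) : ℝ) = (Real.sqrt u)⁻¹ := by
        rw [Real.rpow_neg hupos.le, Real.sqrt_eq_rpow]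
      rw [hrpow]
      calc G u ≤ (ℙ {a | Real.sqrt u / 2 < |X0 a|}).toReal := hTle
        _ ≤ (δ/5) / (Real.sqrt u / 2) := htb
        _ = 2*(δ/5) * (Real.sqrt u)⁻¹ := by field_simp
  have hval : ∫ u in Set.Ioc M (t^2), (2*(δ/5)) * u ^ (-(1/2) : ℝ) ≤ (4*(δ/5)) * t := by
    rw [← intervalIntegral.integral_of_le (by nlinarith : M ≤ t^2)]
    rw [intervalIntegral.integral_const_mul]
    rw [integral_rpow (Or.inl (by norm_num : (-1:ℝ) < -(1/2)))]
    have h1 : (-(1/2) : ℝ) + 1 = 1/2 := by norm_num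
    rw [h1]
    have h2 : (t^2) ^ ((1/2) : ℝ) = t := by
      rw [← Real.sqrt_eq_rpow, Real.sqrt_sq htpos.le]
    have h3 : M ^ ((1/2) : ℝ) = 2*N1 := by
      rw [← Real.sqrt_eq_rpow, hMdef, show (4:ℝ)*N1^2 = (2*N1)^2 by ring,
        Real.sqrt_sq (by linarith)]
    rw [h2, h3]
    nlinarith
  have hfinal : M ≤ δ/5 * t := by
    rw [hMdef]
    rw [div_le_iff₀ hδ] at ht2
    linarith
  linarith


lemma trunc_integral_zero' (X0 : Ω → ℝ) (hmeas0 : Measurable X0)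
    (hsymm : Measure.map X0 ℙ = Measure.map (fun ω => -X0 ω) ℙ) (c : ℝ) :
    ∫ ω, (if |X0 ω| ≤ c then X0 ω else 0) ∂ℙ = 0 := by
  set φ : ℝ → ℝ := fun x => if |x| ≤ c then x else 0 with hφ
  have hφm : Measurable φ :=
    Measurable.ite (measurableSet_le measurable_abs measurable_const)
      measurable_id measurable_const
  have key : ∫ ω, φ (X0 ω) ∂ℙ = ∫ ω, φ (-X0 ω) ∂ℙ := by
    rw [← integral_map hmeas0.aemeasurable hφm.aestronglyMeasurable,
      hsymm, integral_map (φ := fun ω => -X0 ω) hmeas0.neg.aemeasurable hφm.aestronglyMeasurable]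
  have hodd : ∀ x : ℝ, φ (-x) = -φ x := by
    intro x
    simp only [hφ, abs_neg]
    split_ifs <;> simp
  have h2 : ∫ ω, φ (X0 ω) ∂ℙ = - ∫ ω, φ (X0 ω) ∂ℙ := by
    nth_rewrite 1 [key]
    simp_rw [hodd]
    rw [integral_neg]
  have : ∫ ω, φ (X0 ω) ∂ℙ = 0 := by linarith
  exact this


end Aux

theorem cesaro_field_wlln_symmetric
    {Ω : Type*} [MeasureSpace Ω] [IsProbabilityMeasure (ℙ : Measure Ω)]
    (α β : ℝ) (hα0 : 0 < α) (hαβ : α ≤ β) (hβ1 : β ≤ 1)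
    (X : ℕ × ℕ → Ω → ℝ) (X0 : Ω → ℝ)
    (hmeas : ∀ kl, Measurable (X kl)) (hmeas0 : Measurable X0)
    (hindep : iIndepFun X ℙ)
    (hident : ∀ kl, IdentDistrib (X kl) X0 ℙ ℙ)
    (hsymm : Measure.map X0 ℙ = Measure.map (fun ω => -X0 ω) ℙ)
    (hweak : Tendsto (fun n : ℕ => (n : ℝ) * (ℙ {ω | (n : ℝ) < |X0 ω|}).toReal)
      atTop (𝓝 0)) :
    TendstoInMeasure ℙ
      (fun mn : ℕ × ℕ => fun ω =>
        (cesaroA α mn.1 * cesaroA β mn.2)⁻¹ *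
          ∑ k ∈ Finset.range (mn.1 + 1), ∑ l ∈ Finset.range (mn.2 + 1),
            cesaroA (α - 1) (mn.1 - k) * cesaroA (β - 1) (mn.2 - l) * X (k, l) ω)
      atTop (fun _ => (0 : ℝ)) := by
  have hα1 : α ≤ 1 := hαβ.trans hβ1
  have hβ0 : 0 < β := lt_of_lt_of_le hα0 hαβ
  rw [tendstoInMeasure_iff_dist]
  intro ε hε
  simp only [Real.dist_eq, sub_zero]
  rw [ENNReal.tendsto_nhds_zero]
  intro η hη
  suffices H : ∀ r : ℝ, 0 < r → ∀ᶠ mn : ℕ × ℕ in atTop,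
      ℙ {x | ε ≤ |(cesaroA α mn.1 * cesaroA β mn.2)⁻¹ *
          ∑ k ∈ Finset.range (mn.1 + 1), ∑ l ∈ Finset.range (mn.2 + 1),
            cesaroA (α - 1) (mn.1 - k) * cesaroA (β - 1) (mn.2 - l) * X (k, l) x|}
        ≤ ENNReal.ofReal r by
    rcases eq_or_ne η ⊤ with hT | hT
    · subst hT
      exact (H 1 one_pos).mono fun _ _ => le_top
    · have hηt : 0 < η.toReal := ENNReal.toReal_pos hη.ne' hT
      exact (H η.toReal hηt).mono fun mn hmn =>
        hmn.trans (by rw [ENNReal.ofReal_toReal hT])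
  intro r hr
  obtain ⟨N1, hN11, htail⟩ := tail_bound' X0 hweak (half_pos hr)
  obtain ⟨N2, hN21, hsq⟩ := trunc_sq_bound' X0 hmeas0 hweak
    (show 0 < r / 2 * ε ^ 2 by positivity)
  have hBtend : Tendsto (fun mn : ℕ × ℕ => cesaroA α mn.1 * cesaroA β mn.2)
      atTop atTop := by
    have h1 : Tendsto (fun mn : ℕ × ℕ => mn.1) atTop atTop := by
      rw [← prod_atTop_atTop_eq]; exact tendsto_fst
    have h2 : Tendsto (fun mn : ℕ × ℕ => mn.2) atTop atTop := by
      rw [← prod_atTop_atTop_eq]; exact tendsto_snd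
    exact ((cesaroA_tendsto_atTop hα0).comp h1).atTop_mul_atTop₀
      ((cesaroA_tendsto_atTop hβ0).comp h2)
  filter_upwards [hBtend.eventually_ge_atTop (max N1 N2)] with mn hBN
  obtain ⟨m, n⟩ := mn
  simp only at hBN ⊢
  -- notation
  set A : ℝ := cesaroA α m with hAdef
  set Bb : ℝ := cesaroA β n with hBbdef
  have hApos : 0 < A := cesaroA_pos (by linarith) m
  have hBbpos : 0 < Bb := cesaroA_pos (by linarith) n
  have hA1 : 1 ≤ A := cesaroA_one_le hα0.le m
  have hBb1 : 1 ≤ Bb := cesaroA_one_le hβ0.le n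
  set B : ℝ := A * Bb with hBdef
  have hBpos : 0 < B := mul_pos hApos hBbpos
  have hB1 : 1 ≤ B := by nlinarith
  have hBN1 : N1 ≤ B := le_trans (le_max_left _ _) hBN
  have hBN2 : N2 ≤ B := le_trans (le_max_right _ _) hBN
  set a : ℕ → ℝ := fun k => cesaroA (α - 1) (m - k) with hadef
  set b : ℕ → ℝ := fun l => cesaroA (β - 1) (n - l) with hbdef
  have hapos : ∀ k, 0 < a k := fun k => cesaroA_pos (by linarith) _
  have hbpos : ∀ l, 0 < b l := fun l => cesaroA_pos (by linarith) _
  have hale : ∀ k, a k ≤ 1 := fun k => cesaroA_le_one (by linarith) (by linarith) _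
  have hble : ∀ l, b l ≤ 1 := fun l => cesaroA_le_one (by linarith) (by linarith) _
  set s : Finset (ℕ × ℕ) := Finset.range (m + 1) ×ˢ Finset.range (n + 1) with hsdef
  set w : ℕ × ℕ → ℝ := fun p => a p.1 * b p.2 / B with hwdef
  set c : ℕ × ℕ → ℝ := fun p => B / (a p.1 * b p.2) with hcdef
  have hwpos : ∀ p, 0 < w p := fun p => div_pos (mul_pos (hapos _) (hbpos _)) hBpos
  have hable : ∀ p : ℕ × ℕ, a p.1 * b p.2 ≤ 1 := fun p => by
    have h1 := hapos p.1; have h2 := hbpos p.2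
    nlinarith [hale p.1, hble p.2]
  have hcB : ∀ p, B ≤ c p := by
    intro p
    rw [hcdef, le_div_iff₀ (mul_pos (hapos _) (hbpos _))]
    nlinarith [hable p, hapos p.1, hbpos p.2]
  have hcpos : ∀ p, 0 < c p := fun p => lt_of_lt_of_le hBpos (hcB p)
  have hwc : ∀ p, w p * c p = 1 := by
    intro p
    rw [hwdef, hcdef]
    field_simp
    exact div_self (ne_of_gt (mul_pos (hapos _) (hbpos _)))
  have hcinv : ∀ p, (c p)⁻¹ = w p := by
    intro p
    rw [hcdef, hwdef, inv_div]
  have hsuma : ∑ k ∈ Finset.range (m + 1), a k = A := by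
    have hrefl := Finset.sum_range_reflect (fun k => cesaroA (α - 1) k) (m + 1)
    simp only [Nat.add_sub_cancel] at hrefl
    calc ∑ k ∈ Finset.range (m + 1), a k
        = ∑ k ∈ Finset.range (m + 1), cesaroA (α - 1) (m - k) := rfl
      _ = ∑ k ∈ Finset.range (m + 1), cesaroA (α - 1) k := hrefl
      _ = cesaroA α m := sum_cesaroA α m
  have hsumb : ∑ l ∈ Finset.range (n + 1), b l = Bb := by
    have hrefl := Finset.sum_range_reflect (fun l => cesaroA (β - 1) l) (n + 1)
    simp only [Nat.add_sub_cancel] at hrefl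
    calc ∑ l ∈ Finset.range (n + 1), b l
        = ∑ l ∈ Finset.range (n + 1), cesaroA (β - 1) (n - l) := rfl
      _ = ∑ l ∈ Finset.range (n + 1), cesaroA (β - 1) l := hrefl
      _ = cesaroA β n := sum_cesaroA β n
  have hsumw : ∑ p ∈ s, w p = 1 := by
    rw [hsdef]
    rw [Finset.sum_product]
    have : ∀ k, ∑ l ∈ Finset.range (n + 1), w (k, l)
        = a k * (∑ l ∈ Finset.range (n + 1), b l) / B := by
      intro k
      rw [Finset.mul_sum, Finset.sum_div]
    simp_rw [this, hsumb]
    rw [← Finset.sum_div, ← Finset.sum_mul, hsuma, hBdef]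
    field_simp
  -- rewrite statistic
  have hF : ∀ ω : Ω, (A * Bb)⁻¹ *
      ∑ k ∈ Finset.range (m + 1), ∑ l ∈ Finset.range (n + 1),
        cesaroA (α - 1) (m - k) * cesaroA (β - 1) (n - l) * X (k, l) ω
      = ∑ p ∈ s, w p * X p ω := by
    intro ω
    rw [hsdef, Finset.sum_product, Finset.mul_sum]
    refine Finset.sum_congr rfl fun k _ => ?_
    rw [Finset.mul_sum]
    refine Finset.sum_congr rfl fun l _ => ?_
    rw [hwdef]
    show (A * Bb)⁻¹ * (a k * b l * X (k, l) ω) = a k * b l / B * X (k, l) ω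
    rw [hBdef]
    ring
  -- truncated variables
  set φ : ℕ × ℕ → ℝ → ℝ := fun p x => w p * (if |x| ≤ c p then x else 0) with hφdef
  have hφmeas : ∀ p, Measurable (φ p) := fun p =>
    measurable_const.mul (Measurable.ite
      (measurableSet_le measurable_abs measurable_const) measurable_id measurable_const)
  set Z : ℕ × ℕ → Ω → ℝ := fun p ω => φ p (X p ω) with hZdef
  have hZmeas : ∀ p, Measurable (Z p) := fun p => (hφmeas p).comp (hmeas p)
  have hZbd : ∀ p ω, |Z p ω| ≤ 1 := by
    intro p ω
    rw [hZdef, hφdef]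
    simp only
    rw [abs_mul, abs_of_pos (hwpos p)]
    split_ifs with h
    · calc w p * |X p ω| ≤ w p * c p :=
        mul_le_mul_of_nonneg_left h (hwpos p).le
      _ = 1 := hwc p
    · simp
  have hZmem : ∀ p, MemLp (Z p) 2 ℙ := fun p =>
    MemLp.of_bound (hZmeas p).aestronglyMeasurable 1
      (ae_of_all _ fun ω => by rw [Real.norm_eq_abs]; exact hZbd p ω)
  have hZident : ∀ p, IdentDistrib (Z p) (fun ω => φ p (X0 ω)) ℙ ℙ := fun p =>
    (hident p).comp (hφmeas p)
  have hEZ : ∀ p, ∫ ω, Z p ω ∂ℙ = 0 := by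
    intro p
    rw [(hZident p).integral_eq]
    rw [hφdef]
    simp only
    rw [integral_const_mul, trunc_integral_zero' X0 hmeas0 hsymm (c p), mul_zero]
  have hVarZ : ∀ p, variance (Z p) ℙ ≤ r / 2 * ε ^ 2 * w p := by
    intro p
    rw [(hZident p).variance_eq]
    have h1 : variance (fun ω => φ p (X0 ω)) ℙ ≤ ∫ ω, (φ p (X0 ω)) ^ 2 ∂ℙ := by
      have := variance_le_expectation_sq
        (μ := ℙ) (X := fun ω => φ p (X0 ω)) ((hφmeas p).comp hmeas0).aestronglyMeasurable
      simpa [Pi.pow_apply] using this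
    have h2 : ∫ ω, (φ p (X0 ω)) ^ 2 ∂ℙ
        = (w p) ^ 2 * ∫ ω, (if |X0 ω| ≤ c p then (X0 ω) ^ 2 else 0) ∂ℙ := by
      rw [← integral_const_mul]
      refine integral_congr_ae (ae_of_all _ fun ω => ?_)
      rw [hφdef]
      simp only
      split_ifs <;> ring
    have h3 := hsq (c p) (le_trans hBN2 (hcB p))
    have h4 : (0:ℝ) ≤ (w p)^2 := sq_nonneg _
    have h5 : (w p)^2 * (r / 2 * ε ^ 2 * c p) = r / 2 * ε ^ 2 * w p := by
      linear_combination (r / 2 * ε ^ 2 * w p) * hwc p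
    calc variance (fun ω => φ p (X0 ω)) ℙ
        ≤ (w p) ^ 2 * ∫ ω, (if |X0 ω| ≤ c p then (X0 ω) ^ 2 else 0) ∂ℙ := h1.trans_eq h2
      _ ≤ (w p) ^ 2 * (r / 2 * ε ^ 2 * c p) := by
          have hint_nonneg : (0:ℝ) ≤ 1 := zero_le_one
          exact mul_le_mul_of_nonneg_left h3 h4
      _ = r / 2 * ε ^ 2 * w p := h5
  have hZindep : (↑s : Set (ℕ × ℕ)).Pairwise fun p q => IndepFun (Z p) (Z q) ℙ :=
    fun p _ q _ hpq => (hindep.indepFun hpq).comp (hφmeas p) (hφmeas q)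
  set S : Ω → ℝ := ∑ p ∈ s, Z p with hSdef
  have hSapp : ∀ ω, S ω = ∑ p ∈ s, Z p ω := by
    intro ω; rw [hSdef, Finset.sum_apply]
  have hSmem : MemLp S 2 ℙ := memLp_finset_sum' s fun p _ => hZmem p
  have hES : ∫ ω, S ω ∂ℙ = 0 := by
    simp_rw [hSapp]
    rw [integral_finset_sum s fun p _ => (hZmem p).integrable one_le_two]
    simp [hEZ]
  have hVarS : variance S ℙ ≤ r / 2 * ε ^ 2 := by
    rw [hSdef, IndepFun.variance_sum (fun p _ => hZmem p) hZindep]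
    calc ∑ p ∈ s, variance (Z p) ℙ ≤ ∑ p ∈ s, r / 2 * ε ^ 2 * w p :=
        Finset.sum_le_sum fun p _ => hVarZ p
      _ = r / 2 * ε ^ 2 := by rw [← Finset.mul_sum, hsumw, mul_one]
  have hcheb : ℙ {ω | ε ≤ |S ω|} ≤ ENNReal.ofReal (r / 2) := by
    have h := meas_ge_le_variance_div_sq hSmem hε
    have hES' : (∫ ω, S ω ∂ℙ) = 0 := hES
    rw [show ℙ[S] = (0:ℝ) from hES'] at h
    simp only [sub_zero] at h
    refine h.trans (ENNReal.ofReal_le_ofReal ?_)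
    rw [div_le_iff₀ (by positivity)]
    nlinarith
  have htailp : ∀ p ∈ s, ℙ {ω | c p < |X p ω|} ≤ ENNReal.ofReal (r / 2 * w p) := by
    intro p _
    have hms : MeasurableSet {x : ℝ | c p < |x|} :=
      measurableSet_lt measurable_const measurable_abs
    have hmapeq : ℙ {ω | c p < |X p ω|} = ℙ {ω | c p < |X0 ω|} := by
      have h1 : {ω | c p < |X p ω|} = X p ⁻¹' {x | c p < |x|} := rfl
      have h2 : {ω | c p < |X0 ω|} = X0 ⁻¹' {x | c p < |x|} := rfl
      rw [h1, h2, ← Measure.map_apply (hmeas p) hms, ← Measure.map_apply hmeas0 hms,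
        (hident p).map_eq]
    rw [hmapeq]
    have htb := htail (c p) (le_trans hBN1 (hcB p))
    have hle : (ℙ {ω | c p < |X0 ω|}).toReal ≤ r / 2 * w p := by
      refine htb.trans ?_
      rw [div_eq_mul_inv, hcinv p]
    exact (ENNReal.le_ofReal_iff_toReal_le (measure_ne_top _ _)
      (mul_nonneg (by linarith) (hwpos p).le)).mpr hle
  have hincl : {ω | ε ≤ |∑ p ∈ s, w p * X p ω|}
      ⊆ (⋃ p ∈ s, {ω | c p < |X p ω|}) ∪ {ω | ε ≤ |S ω|} := by
    intro ω hω
    by_cases hcase : ∀ p ∈ s, |X p ω| ≤ c p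
    · right
      have hSX : S ω = ∑ p ∈ s, w p * X p ω := by
        rw [hSapp]
        refine Finset.sum_congr rfl fun p hp => ?_
        rw [hZdef, hφdef]
        simp only
        rw [if_pos (hcase p hp)]
      rw [Set.mem_setOf_eq, hSX]
      exact hω
    · left
      push_neg at hcase
      obtain ⟨p, hp, hpc⟩ := hcase
      exact Set.mem_biUnion hp hpc
  have hseteq : {x : Ω | ε ≤ |(A * Bb)⁻¹ *
      ∑ k ∈ Finset.range (m + 1), ∑ l ∈ Finset.range (n + 1),
        cesaroA (α - 1) (m - k) * cesaroA (β - 1) (n - l) * X (k, l) x|}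
      = {ω | ε ≤ |∑ p ∈ s, w p * X p ω|} := by
    ext ω
    rw [Set.mem_setOf_eq, Set.mem_setOf_eq, hF ω]
  rw [hseteq]
  calc ℙ {ω | ε ≤ |∑ p ∈ s, w p * X p ω|}
      ≤ ℙ ((⋃ p ∈ s, {ω | c p < |X p ω|}) ∪ {ω | ε ≤ |S ω|}) := measure_mono hincl
    _ ≤ ℙ (⋃ p ∈ s, {ω | c p < |X p ω|}) + ℙ {ω | ε ≤ |S ω|} := measure_union_le _ _
    _ ≤ (∑ p ∈ s, ℙ {ω | c p < |X p ω|}) + ENNReal.ofReal (r / 2) :=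
        add_le_add (measure_biUnion_finset_le s _) hcheb
    _ ≤ (∑ p ∈ s, ENNReal.ofReal (r / 2 * w p)) + ENNReal.ofReal (r / 2) :=
        add_le_add (Finset.sum_le_sum htailp) le_rfl
    _ = ENNReal.ofReal (∑ p ∈ s, r / 2 * w p) + ENNReal.ofReal (r / 2) := by
        rw [ENNReal.ofReal_sum_of_nonneg fun p _ => mul_nonneg (by linarith) (hwpos p).le]
    _ = ENNReal.ofReal (r / 2) + ENNReal.ofReal (r / 2) := by
        rw [← Finset.mul_sum, hsumw, mul_one]
    _ = ENNReal.ofReal r := by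
        rw [← ENNReal.ofReal_add (by positivity) (by positivity)]
        norm_num
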